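/- arXiv:1907.10179 — 4 statements merged into one kernel-verified Lean document; each statement's English description precedes it below -/
import Mathlib

section
/- Suppose F is proper convex, (x*, y*) is a KKT pair for minimizing F subject to √L x = 0, and ρ > ‖y*‖. If a point x̂ satisfies F(x̂) − F(x*) + ρ‖√L x̂‖ ≤ B for some B ≥ 0, then ‖√L x̂‖ ≤ B/(ρ − ‖y*‖) and −‖y*‖·B/(ρ − ‖y*‖) ≤ F(x̂) − F(x*) ≤ B. -/
open Matrix

lemma cs_dot {n : ℕ} (v w : Fin n → ℝ) :
    |v ⬝ᵥ w| ≤ Real.sqrt (v ⬝ᵥ v) * Real.sqrt (w ⬝ᵥ w) := by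
  have h := Finset.sum_mul_sq_le_sq_mul_sq Finset.univ v w
  have hv : v ⬝ᵥ v = ∑ i, v i ^ 2 := by simp [dotProduct, sq]
  have hw : w ⬝ᵥ w = ∑ i, w i ^ 2 := by simp [dotProduct, sq]
  have : |v ⬝ᵥ w| = Real.sqrt ((v ⬝ᵥ w) ^ 2) := (Real.sqrt_sq_eq_abs _).symm
  rw [this, hv, hw, ← Real.sqrt_mul (by positivity)]
  exact Real.sqrt_le_sqrt h

/-- For a proper convex `F`, a KKT pair `(x*, y*)` and `ρ > ‖y*‖`: if
`F(x̂) − F(x*) + ρ‖√L x̂‖ ≤ B` with `B ≥ 0`, then `‖√L x̂‖ ≤ B/(ρ − ‖y*‖)` and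
`−‖y*‖·B/(ρ − ‖y*‖) ≤ F(x̂) − F(x*) ≤ B`. -/
theorem stmt_6 {n : ℕ} (L sL : Matrix (Fin n) (Fin n) ℝ)
    (hL : L.PosSemidef) (hsL : sL.PosSemidef) (hsq : sL * sL = L)
    (F : (Fin n → ℝ) → EReal)
    (hne_bot : ∀ x, F x ≠ ⊥)
    (hconv : ∀ x y : Fin n → ℝ, ∀ t : ℝ, 0 ≤ t → t ≤ 1 →
      F (t • x + (1 - t) • y) ≤ (t : EReal) * F x + ((1 - t : ℝ) : EReal) * F y)
    (xs ys : Fin n → ℝ)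
    (hproper : F xs ≠ ⊤)
    (hKKT : ∃ g : Fin n → ℝ, g + sL *ᵥ ys = 0 ∧
      ∀ x : Fin n → ℝ, F xs + ((g ⬝ᵥ (x - xs) : ℝ) : EReal) ≤ F x)
    (hfeas : sL *ᵥ xs = 0)
    (ρ B : ℝ) (hB : 0 ≤ B) (hρ : Real.sqrt (ys ⬝ᵥ ys) < ρ)
    (xh : Fin n → ℝ)
    (hbound : F xh - F xs + ((ρ * Real.sqrt ((sL *ᵥ xh) ⬝ᵥ (sL *ᵥ xh)) : ℝ) : EReal)
      ≤ (B : EReal)) :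
    Real.sqrt ((sL *ᵥ xh) ⬝ᵥ (sL *ᵥ xh)) ≤ B / (ρ - Real.sqrt (ys ⬝ᵥ ys)) ∧
    ((-(Real.sqrt (ys ⬝ᵥ ys) * B / (ρ - Real.sqrt (ys ⬝ᵥ ys))) : ℝ) : EReal)
      ≤ F xh - F xs ∧
    F xh - F xs ≤ (B : EReal) := by
  obtain ⟨g, hg, hsub⟩ := hKKT
  set s := Real.sqrt (ys ⬝ᵥ ys) with hs
  set t := Real.sqrt ((sL *ᵥ xh) ⬝ᵥ (sL *ᵥ xh)) with ht
  have ht0 : 0 ≤ t := Real.sqrt_nonneg _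
  have hs0 : 0 ≤ s := Real.sqrt_nonneg _
  have hρs : 0 < ρ - s := by linarith
  have hb : ((F xs).toReal : EReal) = F xs := EReal.coe_toReal hproper (hne_bot xs)
  set b := (F xs).toReal with hbdef
  have hhtop : F xh ≠ ⊤ := by
    intro h
    rw [h, ← hb, EReal.top_sub_coe, EReal.top_add_coe] at hbound
    simp at hbound
  have ha : ((F xh).toReal : EReal) = F xh := EReal.coe_toReal hhtop (hne_bot xh)
  set a := (F xh).toReal with hadef
  rw [← ha, ← hb, ← EReal.coe_sub, ← EReal.coe_add, EReal.coe_le_coe_iff] at hbound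
  have hsub' := hsub xh
  rw [← ha, ← hb, ← EReal.coe_add, EReal.coe_le_coe_iff] at hsub'
  have hgeq : g = -(sL *ᵥ ys) := eq_neg_of_add_eq_zero_left hg
  have hsymm : sLᵀ = sL := by
    have := hsL.1.eq; rwa [Matrix.conjTranspose_eq_transpose_of_trivial] at this
  have hsym : ∀ z, (sL *ᵥ ys) ⬝ᵥ z = ys ⬝ᵥ (sL *ᵥ z) := by
    intro z
    rw [dotProduct_mulVec, ← mulVec_transpose, hsymm, dotProduct_comm]
  have hdot : g ⬝ᵥ (xh - xs) = -(ys ⬝ᵥ (sL *ᵥ xh)) := by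
    rw [hgeq, neg_dotProduct, hsym, mulVec_sub, hfeas, sub_zero]
  rw [hdot] at hsub'
  have hcs : |ys ⬝ᵥ (sL *ᵥ xh)| ≤ s * t := cs_dot ys (sL *ᵥ xh)
  have hle := le_abs_self (ys ⬝ᵥ (sL *ᵥ xh))
  -- a - b ≥ -(s*t)
  have hlb : -(s * t) ≤ a - b := by linarith
  have htB : t ≤ B / (ρ - s) := (le_div_iff₀ hρs).mpr (by nlinarith)
  refine ⟨htB, ?_, ?_⟩
  · rw [← ha, ← hb, ← EReal.coe_sub, EReal.coe_le_coe_iff]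
    have : s * t ≤ s * (B / (ρ - s)) := mul_le_mul_of_nonneg_left htB hs0
    have h2 : s * B / (ρ - s) = s * (B / (ρ - s)) := by ring
    linarith [h2 ▸ this]
  · rw [← ha, ← hb, ← EReal.coe_sub, EReal.coe_le_coe_iff]
    nlinarith
end

section
/- Let (u_k) be a nonnegative sequence and S, B ≥ 0, and suppose u_t² ≤ S + Σ_{k=1}^{t} λ_k u_k for all t, where λ_k ≥ 0. Then u_t ≤ (1/2)Σ_{k=1}^t λ_k + ( S + ((1/2)Σ_{k=1}^t λ_k)² )^{1/2} for all t. -/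
open Finset

/-- Recursive inequality lemma (Schmidt et al.): if `u_t² ≤ S + Σ_{k=1}^t λ_k u_k`
with `u, λ ≥ 0` and `S ≥ 0`, then
`u_t ≤ (1/2)Σ_{k=1}^t λ_k + √(S + ((1/2)Σ_{k=1}^t λ_k)²)`. -/
theorem stmt_10 (u lam : ℕ → ℝ) (S : ℝ) (hS : 0 ≤ S)
    (hu : ∀ t, 0 ≤ u t) (hlam : ∀ k, 0 ≤ lam k)
    (hrec : ∀ t, (u t) ^ 2 ≤ S + ∑ k ∈ Finset.Icc 1 t, lam k * u k) :
    ∀ t, u t ≤ (1 / 2) * ∑ k ∈ Finset.Icc 1 t, lam k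
      + Real.sqrt (S + ((1 / 2) * ∑ k ∈ Finset.Icc 1 t, lam k) ^ 2) := by
  intro t
  set Λ : ℝ := ∑ k ∈ Finset.Icc 1 t, lam k with hΛ
  have hΛ0 : 0 ≤ Λ := Finset.sum_nonneg fun k _ => hlam k
  -- pick the max of u over Icc 0 t
  obtain ⟨j, hjmem, hjmax⟩ : ∃ j ∈ Finset.Icc 0 t, ∀ k ∈ Finset.Icc 0 t, u k ≤ u j := by
    obtain ⟨j, hj, hmax⟩ := Finset.exists_max_image (Finset.Icc 0 t) u
      ⟨t, by simp⟩
    exact ⟨j, hj, hmax⟩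
  have hjle : j ≤ t := (Finset.mem_Icc.mp hjmem).2
  set M := u j with hM
  have hMt : u t ≤ M := hjmax t (by simp)
  -- key quadratic inequality
  have hkey : M ^ 2 ≤ S + Λ * M := by
    calc M ^ 2 ≤ S + ∑ k ∈ Finset.Icc 1 j, lam k * u k := hrec j
    _ ≤ S + ∑ k ∈ Finset.Icc 1 t, lam k * u k := by
        exact add_le_add_right (Finset.sum_le_sum_of_subset_of_nonneg
          (Finset.Icc_subset_Icc_right hjle)
          (fun k _ _ => mul_nonneg (hlam k) (hu k))) S
    _ ≤ S + ∑ k ∈ Finset.Icc 1 t, lam k * M := by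
        gcongr with k hk
        · exact hlam k
        · exact hjmax k (Finset.mem_Icc.mpr ⟨Nat.zero_le _, (Finset.mem_Icc.mp hk).2⟩)
    _ = S + Λ * M := by rw [← Finset.sum_mul]
  have hsq : (M - (1/2) * Λ) ^ 2 ≤ S + ((1/2) * Λ) ^ 2 := by nlinarith
  have : M - (1/2) * Λ ≤ Real.sqrt (S + ((1/2) * Λ) ^ 2) := by
    calc M - (1/2) * Λ ≤ |M - (1/2) * Λ| := le_abs_self _
    _ = Real.sqrt ((M - (1/2) * Λ) ^ 2) := (Real.sqrt_sq_eq_abs _).symm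
    _ ≤ _ := Real.sqrt_le_sqrt hsq
  linarith
end

section
/- Suppose x_{k+1} is updated by the event-triggered linearized augmented Lagrangian step, so that 0 = ∇f(x_k) + ∂̃g(x_{k+1}) + z_{k+1} + P(x_{k+1} − x_k) + βL(e_k − e_{k+1}) where P = H − βL ≻ 0. Then for any x with Lx = 0 and any z ∈ span^⊥{1}: F(x_{k+1}) − F(x) + ⟨z, x_{k+1}⟩ ≤ −(1/2)‖x_{k+1} − x_k‖²_{P−L_f} − (1/2)(‖x_{k+1} − x‖²_P − ‖x_k − x‖²_P) − ⟨x_{k+1} − x, βL(e_k − e_{k+1})⟩ + ⟨e_{k+1}, z_{k+1} − z⟩ + (1/2)(‖z − z_k‖²_{(βL+11ᵀ/n)^{-1}} − ‖z − z_{k+1}‖²_{(βL+11ᵀ/n)^{-1}}) − (1/2)‖z_{k+1} − z_k‖²_{(βL+11ᵀ/n)^{-1}}. -/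
open Matrix

lemma dot_symm {n : ℕ} (A : Matrix (Fin n) (Fin n) ℝ) (hA : Aᵀ = A) (a b : Fin n → ℝ) :
    a ⬝ᵥ (A *ᵥ b) = b ⬝ᵥ (A *ᵥ a) := by
  rw [dotProduct_mulVec, ← mulVec_transpose, hA, dotProduct_comm]

lemma quad_add {n : ℕ} (A : Matrix (Fin n) (Fin n) ℝ) (hA : Aᵀ = A) (a b : Fin n → ℝ) :
    (a + b) ⬝ᵥ (A *ᵥ (a + b)) =
      a ⬝ᵥ (A *ᵥ a) + 2 * (a ⬝ᵥ (A *ᵥ b)) + b ⬝ᵥ (A *ᵥ b) := by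
  simp only [mulVec_add, dotProduct_add, add_dotProduct]
  rw [dot_symm A hA b a]; ring

lemma dot_const {n : ℕ} (u : Fin n → ℝ) (c : ℝ) :
    u ⬝ᵥ (fun _ => c) = (u ⬝ᵥ (fun _ => (1:ℝ))) * c := by
  simp [dotProduct, Finset.sum_mul]

lemma ones_mulVec {n : ℕ} (v : Fin n → ℝ) :
    (Matrix.of (fun _ _ => (1:ℝ)) : Matrix (Fin n) (Fin n) ℝ) *ᵥ v
      = fun _ => (fun _ => (1:ℝ)) ⬝ᵥ v := by
  ext i; simp [Matrix.mulVec, dotProduct]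

/-- One-step inequality for the event-triggered linearized augmented Lagrangian
method (Lemma 3 of the paper). -/
theorem stmt_14 {n : ℕ} (G : SimpleGraph (Fin n)) [DecidableRel G.Adj]
    (hG : G.Connected) (β : ℝ) (hβ : 0 < β)
    (η lf : Fin n → ℝ) (hη : ∀ i, 0 < η i) (hlf : ∀ i, 0 ≤ lf i)
    -- P = H − βL ≻ 0 and P ≻ L_f
    (hP : (Matrix.diagonal η - β • G.lapMatrix ℝ).PosDef)
    (hPLf : (Matrix.diagonal η - β • G.lapMatrix ℝ - Matrix.diagonal lf).PosDef)
    (f gC : (Fin n → ℝ) → ℝ) (gradf : (Fin n → ℝ) → (Fin n → ℝ))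
    -- smoothness (descent lemma) for f with modulus L_f
    (hdesc : ∀ u v : Fin n → ℝ, f v ≤ f u + gradf u ⬝ᵥ (v - u)
      + (1 / 2) * ((v - u) ⬝ᵥ (Matrix.diagonal lf *ᵥ (v - u))))
    -- convexity of f
    (hconvf : ∀ u v : Fin n → ℝ, f u + gradf u ⬝ᵥ (v - u) ≤ f v)
    (x₀ x₁ z₀ z₁ e₀ e₁ : Fin n → ℝ) (sg : Fin n → ℝ)
    -- sg is a subgradient of the convex function gC at x₁
    (hsg : ∀ y : Fin n → ℝ, gC x₁ + sg ⬝ᵥ (y - x₁) ≤ gC y)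
    -- optimality condition of the primal update
    (hopt : gradf x₀ + sg + z₁ + (Matrix.diagonal η - β • G.lapMatrix ℝ) *ᵥ (x₁ - x₀)
      + β • (G.lapMatrix ℝ *ᵥ (e₀ - e₁)) = 0)
    -- dual variable lies in span⊥{1} and follows the dual update
    (hz₀ : z₀ ⬝ᵥ (fun _ => (1 : ℝ)) = 0)
    (hzup : z₁ = z₀ + β • (G.lapMatrix ℝ *ᵥ (x₁ + e₁))) :
    ∀ x z : Fin n → ℝ, G.lapMatrix ℝ *ᵥ x = 0 → z ⬝ᵥ (fun _ => (1 : ℝ)) = 0 →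
      (f x₁ + gC x₁) - (f x + gC x) + z ⬝ᵥ x₁ ≤
        -(1 / 2) * ((x₁ - x₀) ⬝ᵥ
            ((Matrix.diagonal η - β • G.lapMatrix ℝ - Matrix.diagonal lf) *ᵥ (x₁ - x₀)))
        - (1 / 2) * ((x₁ - x) ⬝ᵥ ((Matrix.diagonal η - β • G.lapMatrix ℝ) *ᵥ (x₁ - x))
            - (x₀ - x) ⬝ᵥ ((Matrix.diagonal η - β • G.lapMatrix ℝ) *ᵥ (x₀ - x)))
        - (x₁ - x) ⬝ᵥ (β • (G.lapMatrix ℝ *ᵥ (e₀ - e₁)))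
        + e₁ ⬝ᵥ (z₁ - z)
        + (1 / 2) * ((z - z₀) ⬝ᵥ
              ((β • G.lapMatrix ℝ + ((n : ℝ)⁻¹) • Matrix.of (fun _ _ => (1 : ℝ)))⁻¹ *ᵥ (z - z₀))
            - (z - z₁) ⬝ᵥ
              ((β • G.lapMatrix ℝ + ((n : ℝ)⁻¹) • Matrix.of (fun _ _ => (1 : ℝ)))⁻¹ *ᵥ (z - z₁)))
        - (1 / 2) * ((z₁ - z₀) ⬝ᵥ
            ((β • G.lapMatrix ℝ + ((n : ℝ)⁻¹) • Matrix.of (fun _ _ => (1 : ℝ)))⁻¹ *ᵥ (z₁ - z₀))) := by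
  intro x z hx hz1
  set L := G.lapMatrix ℝ with hLdef
  have hLs : Lᵀ = L := G.isSymm_lapMatrix (R := ℝ)
  have hn0 : 0 < n := Fin.pos_iff_nonempty.mpr hG.nonempty
  have hn : (n : ℝ) ≠ 0 := Nat.cast_ne_zero.mpr hn0.ne'
  set J : Matrix (Fin n) (Fin n) ℝ := Matrix.of (fun _ _ => (1:ℝ)) with hJdef
  set M : Matrix (Fin n) (Fin n) ℝ := β • L + ((n : ℝ)⁻¹) • J with hMdef
  set P : Matrix (Fin n) (Fin n) ℝ := Matrix.diagonal η - β • L with hPdef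
  have hPs : Pᵀ = P := by
    rw [hPdef, transpose_sub, transpose_smul, hLs, diagonal_transpose]
  have hMs : Mᵀ = M := by
    rw [hMdef, transpose_add, transpose_smul, transpose_smul, hLs]
    rfl
  -- quadratic form of L vanishes only on constants
  have hLconst : ∀ v : Fin n → ℝ, v ⬝ᵥ (L *ᵥ v) = 0 → ∀ i j, v i = v j := by
    intro v hv i j
    refine (G.lapMatrix_toLinearMap₂'_apply'_eq_zero_iff_forall_reachable v).mp ?_ i j
      (hG.preconnected i j)
    rw [Matrix.toLinearMap₂'_apply']
    exact hv
  have hLpsd : ∀ v : Fin n → ℝ, 0 ≤ v ⬝ᵥ (L *ᵥ v) := by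
    intro v
    have h := (posSemidef_iff_dotProduct_mulVec.mp (SimpleGraph.posSemidef_lapMatrix ℝ G)).2 v
    simpa using h
  have hJq : ∀ v : Fin n → ℝ, v ⬝ᵥ (J *ᵥ v) = ((fun _ => (1:ℝ)) ⬝ᵥ v)^2 := by
    intro v
    rw [hJdef, ones_mulVec v, dot_const]
    have : v ⬝ᵥ (fun _ => (1:ℝ)) = (fun _ => (1:ℝ)) ⬝ᵥ v := dotProduct_comm _ _
    rw [this]; ring
  have hMpd : M.PosDef := by
    refine posDef_iff_dotProduct_mulVec.mpr ⟨?_, ?_⟩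
    · rw [Matrix.IsHermitian, conjTranspose_eq_transpose_of_trivial, hMs]
    · intro v hv
      have hstar : star v = v := star_trivial v
      rw [hstar, hMdef, add_mulVec, dotProduct_add, smul_mulVec, smul_mulVec,
        dotProduct_smul, dotProduct_smul, smul_eq_mul, smul_eq_mul, hJq]
      rcases lt_or_eq_of_le (hLpsd v) with h | h
      · have : 0 ≤ (n:ℝ)⁻¹ * ((fun _ => (1:ℝ)) ⬝ᵥ v)^2 := by positivity
        nlinarith
      · have i0 : Fin n := ⟨0, hn0⟩
        have hc : ∀ j, v j = v i0 := fun j => hLconst v h.symm j i0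
        have hvne : v i0 ≠ 0 := by
          intro h0
          exact hv (funext fun j => by rw [hc j, h0]; rfl)
        have hs : (fun _ => (1:ℝ)) ⬝ᵥ v = (n : ℝ) * v i0 := by
          simp only [dotProduct, one_mul]
          rw [Finset.sum_congr rfl (fun j _ => hc j), Finset.sum_const, Finset.card_univ,
            Fintype.card_fin, nsmul_eq_mul]
        have h2 : 0 < ((fun _ => (1:ℝ)) ⬝ᵥ v)^2 := by
          rw [hs]
          exact lt_of_le_of_ne (sq_nonneg _)
            (Ne.symm (pow_ne_zero 2 (mul_ne_zero hn hvne)))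
        have h3 : 0 < (n:ℝ)⁻¹ := by positivity
        nlinarith
  have hdet : IsUnit M.det := hMpd.det_pos.ne'.isUnit
  have hMinvMul : M⁻¹ * M = 1 := Matrix.nonsing_inv_mul M hdet
  have hMinvs : (M⁻¹)ᵀ = M⁻¹ := by rw [Matrix.transpose_nonsing_inv, hMs]
  set w : Fin n → ℝ := x₁ + e₁ with hwdef
  set c : ℝ := ((fun _ => (1:ℝ)) ⬝ᵥ w) / n with hcdef
  set v : Fin n → ℝ := w - (fun _ => c) with hvdef
  have hconstc : ((fun _ => c) : Fin n → ℝ) = c • ((fun _ => (1:ℝ)) : Fin n → ℝ) := by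
    funext i; simp
  have hLv : L *ᵥ v = L *ᵥ w := by
    rw [hvdef, mulVec_sub, hconstc, mulVec_smul, G.lapMatrix_mulVec_const_eq_zero]
    simp
  have hone : ((fun _ => (1:ℝ)) : Fin n → ℝ) ⬝ᵥ ((fun _ => c) : Fin n → ℝ) = (n : ℝ) * c := by
    simp [dotProduct, Finset.sum_const, Finset.card_univ, mul_comm]
  have hsumv : (fun _ => (1:ℝ)) ⬝ᵥ v = 0 := by
    rw [hvdef, dotProduct_sub, hone, hcdef]
    field_simp
    ring
  have hJv : J *ᵥ v = 0 := by
    rw [hJdef, ones_mulVec v, hsumv]; rfl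
  have hMv : M *ᵥ v = β • (L *ᵥ w) := by
    rw [hMdef, add_mulVec, smul_mulVec, smul_mulVec, hJv, hLv]
    simp
  have hz10 : z₁ - z₀ = β • (L *ᵥ w) := by rw [hzup]; abel
  have hMinv_z : M⁻¹ *ᵥ (z₁ - z₀) = v := by
    rw [hz10, ← hMv, mulVec_mulVec, hMinvMul, one_mulVec]
  -- orthogonality facts
  have hLw1 : (β • (L *ᵥ w)) ⬝ᵥ (fun _ => (1:ℝ)) = 0 := by
    rw [smul_dotProduct, dotProduct_comm, dot_symm L hLs,
      G.lapMatrix_mulVec_const_eq_zero, dotProduct_zero, smul_zero]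
  have hz₁1 : z₁ ⬝ᵥ (fun _ => (1:ℝ)) = 0 := by
    rw [hzup, add_dotProduct, hz₀, hLw1, add_zero]
  -- x is a constant vector
  obtain ⟨i0⟩ := hG.nonempty
  have hxc : ∀ j, x j = x i0 := by
    intro j
    exact G.lapMatrix_mulVec_eq_zero_iff_forall_reachable.mp hx j i0
      (hG.preconnected j i0)
  have hxe : x = fun _ => x i0 := funext hxc
  have hz₁x : z₁ ⬝ᵥ x = 0 := by rw [hxe, dot_const, hz₁1, zero_mul]
  have hzx : z ⬝ᵥ x = 0 := by rw [hxe, dot_const, hz1, zero_mul]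
  -- primal optimality, dotted with x₁ - x
  have hopt' : gradf x₀ ⬝ᵥ (x₁ - x) + sg ⬝ᵥ (x₁ - x) + z₁ ⬝ᵥ (x₁ - x)
      + (P *ᵥ (x₁ - x₀)) ⬝ᵥ (x₁ - x) + (β • (L *ᵥ (e₀ - e₁))) ⬝ᵥ (x₁ - x) = 0 := by
    have h := congrArg (fun u => u ⬝ᵥ (x₁ - x)) hopt
    simpa only [add_dotProduct, zero_dotProduct] using h
  -- step A : function value bound
  have hvec1 : (x₁ - x₀) - (x - x₀) = x₁ - x := by abel
  have hgd : gradf x₀ ⬝ᵥ (x₁ - x₀) - gradf x₀ ⬝ᵥ (x - x₀) = gradf x₀ ⬝ᵥ (x₁ - x) := by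
    rw [← dotProduct_sub, hvec1]
  have hvec2 : (x - x₁) = -(x₁ - x) := by abel
  have hsg' : sg ⬝ᵥ (x - x₁) = -(sg ⬝ᵥ (x₁ - x)) := by
    rw [hvec2, dotProduct_neg]
  have keyA : f x₁ + gC x₁ - (f x + gC x) ≤ gradf x₀ ⬝ᵥ (x₁ - x) + sg ⬝ᵥ (x₁ - x)
      + (1 / 2) * ((x₁ - x₀) ⬝ᵥ (Matrix.diagonal lf *ᵥ (x₁ - x₀))) := by
    have h1 := hdesc x₀ x₁
    have h2 := hconvf x₀ x
    have h3 := hsg x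
    rw [hsg'] at h3
    linarith [hgd]
  -- P quadratic identity
  have hvec3 : x₁ - x = (x₀ - x) + (x₁ - x₀) := by abel
  have hcross : (P *ᵥ (x₁ - x₀)) ⬝ᵥ (x₁ - x)
      = (x₀ - x) ⬝ᵥ (P *ᵥ (x₁ - x₀)) + (x₁ - x₀) ⬝ᵥ (P *ᵥ (x₁ - x₀)) := by
    rw [dotProduct_comm, hvec3, add_dotProduct]
  have hqP : (x₁ - x) ⬝ᵥ (P *ᵥ (x₁ - x))
      = (x₀ - x) ⬝ᵥ (P *ᵥ (x₀ - x)) + 2 * ((x₀ - x) ⬝ᵥ (P *ᵥ (x₁ - x₀)))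
        + (x₁ - x₀) ⬝ᵥ (P *ᵥ (x₁ - x₀)) := by
    rw [hvec3]; exact quad_add P hPs _ _
  -- split of the (P - diag lf) quadratic
  have hlfsplit : (x₁ - x₀) ⬝ᵥ ((P - Matrix.diagonal lf) *ᵥ (x₁ - x₀))
      = (x₁ - x₀) ⬝ᵥ (P *ᵥ (x₁ - x₀))
        - (x₁ - x₀) ⬝ᵥ (Matrix.diagonal lf *ᵥ (x₁ - x₀)) := by
    rw [sub_mulVec, dotProduct_sub]
  -- commutation for the e-term
  have hE : (β • (L *ᵥ (e₀ - e₁))) ⬝ᵥ (x₁ - x) = (x₁ - x) ⬝ᵥ (β • (L *ᵥ (e₀ - e₁))) :=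
    dotProduct_comm _ _
  -- z₁ ⬝ (x₁ - x) = z₁ ⬝ x₁
  have hz₁split : z₁ ⬝ᵥ (x₁ - x) = z₁ ⬝ᵥ x₁ := by
    rw [dotProduct_sub, hz₁x, sub_zero]
  -- dual quadratic identity
  have hvec4 : (z - z₁) + (z₁ - z₀) = z - z₀ := by abel
  have hqM : (z - z₀) ⬝ᵥ (M⁻¹ *ᵥ (z - z₀))
      = (z - z₁) ⬝ᵥ (M⁻¹ *ᵥ (z - z₁)) + 2 * ((z - z₁) ⬝ᵥ (M⁻¹ *ᵥ (z₁ - z₀)))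
        + (z₁ - z₀) ⬝ᵥ (M⁻¹ *ᵥ (z₁ - z₀)) := by
    rw [← hvec4]; exact quad_add M⁻¹ hMinvs _ _
  have hzz1 : (z - z₁) ⬝ᵥ (fun _ => (1:ℝ)) = 0 := by
    rw [sub_dotProduct, hz1, hz₁1, sub_zero]
  have hmid : (z - z₁) ⬝ᵥ (M⁻¹ *ᵥ (z₁ - z₀))
      = z ⬝ᵥ x₁ - z₁ ⬝ᵥ x₁ - e₁ ⬝ᵥ (z₁ - z) := by
    rw [hMinv_z, hvdef, dotProduct_sub, dot_const, hzz1, zero_mul, sub_zero, hwdef,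
      dotProduct_add]
    simp only [sub_dotProduct, dotProduct_sub]
    rw [dotProduct_comm z e₁, dotProduct_comm z₁ e₁]
    ring
  -- conclude
  have hzdot : z ⬝ᵥ x₁ - z ⬝ᵥ x = z ⬝ᵥ x₁ := by rw [hzx, sub_zero]
  linarith [keyA, hopt', hcross, hqP, hlfsplit, hE, hz₁split, hqM, hmid]
end

section
/- Let P ≻ 0, Q ⪰ 0 symmetric, and suppose real numbers σ, k_5 > 0, 0 < k_4 < 1, k_2 > 0, k_3 > 2 satisfy: (σ+k_5)(k_2+k_3−1)L_f² ⪯ k_4 Q (1−2/k_3) λ_min(βL+11ᵀ/n), (σ+k_5)P² ⪯ (P − L_f²/k_1)(1−2/k_3)λ_min(βL+11ᵀ/n), and (σ+k_5)(P + k_4 Q) ⪯ (1−k_4)Q. If additionally ‖P(x_{k+1}−x_k)‖² ≥ (1−k_2−k_3)‖x_k−x*‖²_{L_f²} + (1−2/k_3)‖z_{k+1}−z*‖² + (1−1/k_2−k_3)‖βL(e_k−e_{k+1})‖², then (1/2)‖x_{k+1}−x*‖²_{(1−k_4)Q} + (1/2)‖x_{k+1}−x_k‖²_{P−L_f²/k_1}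 + (1/2)‖x_k−x*‖²_{k_4 Q} + (1/2)‖z_k−z_{k+1}‖²_{(βL+11ᵀ/n)^{-1}} + ((k_3+1/k_2−1)(σ+k_5)/(2(1−2/k_3)λ_min(βL+11ᵀ/n)))‖βL(e_k−e_{k+1})‖² ≥ ((σ+k_5)/2)(‖x_{k+1}−x*‖²_{P+k_4Q} + ‖z_{k+1}−z*‖²_{(βL+11ᵀ/n)^{-1}}). -/
open Matrix

lemma inv_quad_bound {n : ℕ} {M : Matrix (Fin n) (Fin n) ℝ} (hM : M.PosDef)
    (hH : M.IsHermitian) {lam : ℝ}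
    (hlam : IsLeast (Set.range hH.eigenvalues) lam) (v : Fin n → ℝ) :
    0 < lam ∧ v ⬝ᵥ (M⁻¹ *ᵥ v) ≤ lam⁻¹ * (v ⬝ᵥ v) := by
  obtain ⟨⟨i0, hi0⟩, hlb⟩ := hlam
  set U : Matrix (Fin n) (Fin n) ℝ := (hH.eigenvectorUnitary : Matrix (Fin n) (Fin n) ℝ) with hU
  set μ : Fin n → ℝ := hH.eigenvalues with hμ
  have hUU : U * star U = 1 := mem_unitaryGroup_iff.mp hH.eigenvectorUnitary.2
  have hUU' : star U * U = 1 := mem_unitaryGroup_iff'.mp hH.eigenvectorUnitary.2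
  have hspec : M = U * diagonal μ * star U := by
    have := hH.spectral_theorem
    simpa [Function.comp] using this
  have hpos : ∀ i, 0 < μ i := fun i => hM.eigenvalues_pos i
  have hlampos : 0 < lam := hi0 ▸ hpos i0
  clear_value U μ
  have hinv : M⁻¹ = U * diagonal (fun i => (μ i)⁻¹) * star U := by
    apply inv_eq_right_inv
    rw [hspec]
    calc U * diagonal μ * star U * (U * diagonal (fun i => (μ i)⁻¹) * star U)
        = U * diagonal μ * (star U * U) * diagonal (fun i => (μ i)⁻¹) * star U := by
          noncomm_ring
      _ = U * (diagonal μ * diagonal (fun i => (μ i)⁻¹)) * star U := by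
          rw [hUU']; noncomm_ring
      _ = 1 := by
          rw [diagonal_mul_diagonal]
          have : (fun i => μ i * (μ i)⁻¹) = fun _ => (1:ℝ) := by
            funext i; exact mul_inv_cancel₀ (hpos i).ne'
          rw [this, diagonal_one, mul_one, hUU]
  have hNpsd : (lam⁻¹ • (1 : Matrix (Fin n) (Fin n) ℝ) - M⁻¹).PosSemidef := by
    have h1 : lam⁻¹ • (1 : Matrix (Fin n) (Fin n) ℝ) = U * diagonal (fun _ => lam⁻¹) * star U := by
      rw [smul_one_eq_diagonal]
      calc (diagonal fun _ => lam⁻¹) = U * star U * diagonal (fun _ => lam⁻¹) := by rw [hUU, one_mul]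
        _ = U * diagonal (fun _ => lam⁻¹) * star U := by
            rw [mul_assoc, mul_assoc]
            congr 1
            rw [← smul_one_eq_diagonal, smul_mul_assoc, mul_smul_comm, one_mul, mul_one]
    have h2 : lam⁻¹ • (1 : Matrix (Fin n) (Fin n) ℝ) - M⁻¹
        = U * diagonal (fun i => lam⁻¹ - (μ i)⁻¹) * star U := by
      rw [h1, hinv, ← sub_mul, ← mul_sub, diagonal_sub]
    rw [h2, star_eq_conjTranspose]
    exact (posSemidef_diagonal_iff.mpr fun i =>
      sub_nonneg.mpr (inv_anti₀ hlampos (hlb ⟨i, rfl⟩))).mul_mul_conjTranspose_same U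
  refine ⟨hlampos, ?_⟩
  have := hNpsd.dotProduct_mulVec_nonneg v
  simp only [star_trivial, sub_mulVec, smul_mulVec, one_mulVec, dotProduct_sub,
    dotProduct_smul, smul_eq_mul] at this
  linarith

private lemma helper_t2 (s c l z : ℝ) (hl : l ≠ 0) :
    s * (c * l) * (l⁻¹ * z) = s * (c * z) := by
  field_simp

private lemma helper_h6 (s d zi : ℝ) (hd : d ≠ 0) :
    s / 2 * zi = s * d * zi / (2 * d) := by
  field_simp

private lemma helper_h7 (x y z w c l : ℝ) (hc : c ≠ 0) (hl : l ≠ 0) :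
    (1 / 2) * x + (1 / 2) * y + (z / (2 * c * l)) * w
      = (c * l * x + c * l * y + z * w) / (2 * (c * l)) := by
  field_simp

/-- The matrix `βL + 11ᵀ/n` appearing in the dual weighting. -/
noncomputable def Mmat {n : ℕ} (G : SimpleGraph (Fin n)) [DecidableRel G.Adj]
    (β : ℝ) : Matrix (Fin n) (Fin n) ℝ :=
  β • G.lapMatrix ℝ + ((n : ℝ)⁻¹) • Matrix.of (fun _ _ => (1 : ℝ))

set_option maxHeartbeats 1000000 in
/-- Key inequality establishing linear convergence (derivation of Theorem 2). -/
theorem stmt_16 {n : ℕ} (G : SimpleGraph (Fin n)) [DecidableRel G.Adj]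
    (hG : G.Connected) (β : ℝ) (hβ : 0 < β)
    (P Q Lf : Matrix (Fin n) (Fin n) ℝ)
    (hP : P.PosDef) (hQsymm : Q.IsHermitian) (hQ : Q.PosSemidef)
    (hMM : (Mmat G β).PosDef) (hHerm : (Mmat G β).IsHermitian)
    (lam : ℝ)
    -- lam is the smallest eigenvalue of βL + 11ᵀ/n
    (hlam : IsLeast (Set.range hHerm.eigenvalues) lam)
    (σ k₁ k₂ k₃ k₄ k₅ : ℝ)
    (hσ : 0 < σ) (hk₁ : 0 < k₁) (hk₂ : 0 < k₂) (hk₃ : 2 < k₃)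
    (hk₄ : 0 < k₄) (hk₄' : k₄ < 1) (hk₅ : 0 < k₅)
    -- (σ+k₅)(k₂+k₃−1)L_f² ⪯ k₄Q(1−2/k₃)λ_min(βL+11ᵀ/n)
    (h1 : ((k₄ * (1 - 2 / k₃) * lam) • Q - ((σ + k₅) * (k₂ + k₃ - 1)) • (Lf * Lf)).PosSemidef)
    -- (σ+k₅)P² ⪯ (P − L_f²/k₁)(1−2/k₃)λ_min(βL+11ᵀ/n)
    (h2 : (((1 - 2 / k₃) * lam) • (P - k₁⁻¹ • (Lf * Lf)) - (σ + k₅) • (P * P)).PosSemidef)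
    -- (σ+k₅)(P + k₄Q) ⪯ (1−k₄)Q
    (h3 : ((1 - k₄) • Q - (σ + k₅) • (P + k₄ • Q)).PosSemidef)
    (x₀ x₁ xs z₀ z₁ zs e₀ e₁ : Fin n → ℝ)
    -- lower bound on ‖P(x_{k+1}−x_k)‖²
    (hkey : (P *ᵥ (x₁ - x₀)) ⬝ᵥ (P *ᵥ (x₁ - x₀)) ≥
      (1 - k₂ - k₃) * ((x₀ - xs) ⬝ᵥ ((Lf * Lf) *ᵥ (x₀ - xs)))
      + (1 - 2 / k₃) * ((z₁ - zs) ⬝ᵥ (z₁ - zs))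
      + (1 - 1 / k₂ - k₃) *
          ((β • (G.lapMatrix ℝ *ᵥ (e₀ - e₁))) ⬝ᵥ (β • (G.lapMatrix ℝ *ᵥ (e₀ - e₁))))) :
    (1 / 2) * ((x₁ - xs) ⬝ᵥ (((1 - k₄) • Q) *ᵥ (x₁ - xs)))
    + (1 / 2) * ((x₁ - x₀) ⬝ᵥ ((P - k₁⁻¹ • (Lf * Lf)) *ᵥ (x₁ - x₀)))
    + (1 / 2) * ((x₀ - xs) ⬝ᵥ ((k₄ • Q) *ᵥ (x₀ - xs)))
    + (1 / 2) * ((z₀ - z₁) ⬝ᵥ ((Mmat G β)⁻¹ *ᵥ (z₀ - z₁)))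
    + ((k₃ + 1 / k₂ - 1) * (σ + k₅) / (2 * (1 - 2 / k₃) * lam)) *
        ((β • (G.lapMatrix ℝ *ᵥ (e₀ - e₁))) ⬝ᵥ (β • (G.lapMatrix ℝ *ᵥ (e₀ - e₁))))
    ≥ ((σ + k₅) / 2) *
        ((x₁ - xs) ⬝ᵥ ((P + k₄ • Q) *ᵥ (x₁ - xs))
          + (z₁ - zs) ⬝ᵥ ((Mmat G β)⁻¹ *ᵥ (z₁ - zs))) := by
  have hs : (0:ℝ) < σ + k₅ := by linarith
  have hc : (0:ℝ) < 1 - 2 / k₃ := by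
    have h : 2 / k₃ < 1 := (div_lt_one (by linarith)).mpr (by linarith)
    linarith
  obtain ⟨hlam0, hZi⟩ := inv_quad_bound hMM hHerm hlam (z₁ - zs)
  have hW : 0 ≤ (z₀ - z₁) ⬝ᵥ ((Mmat G β)⁻¹ *ᵥ (z₀ - z₁)) := by
    simpa using (hMM.inv).posSemidef.dotProduct_mulVec_nonneg (z₀ - z₁)
  have hErr : 0 ≤ (β • (G.lapMatrix ℝ *ᵥ (e₀ - e₁))) ⬝ᵥ (β • (G.lapMatrix ℝ *ᵥ (e₀ - e₁))) := by
    simpa using dotProduct_star_self_nonneg (β • (G.lapMatrix ℝ *ᵥ (e₀ - e₁)))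
  have hPT : Pᵀ = P := by
    rw [← conjTranspose_eq_transpose_of_trivial]; exact hP.isHermitian
  have hv : ∀ u : Fin n → ℝ, u ᵥ* P = P *ᵥ u := by
    intro u; nth_rewrite 1 [← hPT]; exact vecMul_transpose P u
  have hPP : (P *ᵥ (x₁ - x₀)) ⬝ᵥ (P *ᵥ (x₁ - x₀))
      = (x₁ - x₀) ⬝ᵥ ((P * P) *ᵥ (x₁ - x₀)) := by
    rw [← mulVec_mulVec, dotProduct_mulVec, hv]
    exact dotProduct_comm _ _
  rw [hPP] at hkey
  have q1 := h1.dotProduct_mulVec_nonneg (x₀ - xs)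
  have q2 := h2.dotProduct_mulVec_nonneg (x₁ - x₀)
  have q3 := h3.dotProduct_mulVec_nonneg (x₁ - xs)
  simp only [star_trivial, sub_mulVec, add_mulVec, smul_mulVec, dotProduct_sub,
    dotProduct_add, dotProduct_smul, smul_eq_mul] at q1 q2 q3
  simp only [dotProduct_smul, smul_eq_mul] at hkey hErr
  simp only [star_trivial, sub_mulVec, add_mulVec, smul_mulVec, dotProduct_sub,
    dotProduct_add, dotProduct_smul, smul_eq_mul]
  set A := (x₁ - xs) ⬝ᵥ Q *ᵥ (x₁ - xs) with hA
  set B := (x₁ - xs) ⬝ᵥ P *ᵥ (x₁ - xs) with hB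
  set C := (x₁ - x₀) ⬝ᵥ P *ᵥ (x₁ - x₀) with hC
  set D := (x₁ - x₀) ⬝ᵥ (Lf * Lf) *ᵥ (x₁ - x₀) with hD
  set Pp := (x₁ - x₀) ⬝ᵥ (P * P) *ᵥ (x₁ - x₀) with hPp
  set E := (x₀ - xs) ⬝ᵥ Q *ᵥ (x₀ - xs) with hE
  set F := (x₀ - xs) ⬝ᵥ (Lf * Lf) *ᵥ (x₀ - xs) with hF
  set Z := (z₁ - zs) ⬝ᵥ (z₁ - zs) with hZ
  set Zi := (z₁ - zs) ⬝ᵥ (Mmat G β)⁻¹ *ᵥ (z₁ - zs) with hZidef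
  set W := (z₀ - z₁) ⬝ᵥ (Mmat G β)⁻¹ *ᵥ (z₀ - z₁) with hWdef
  set Er := (β • (G.lapMatrix ℝ *ᵥ (e₀ - e₁))) ⬝ᵥ (G.lapMatrix ℝ *ᵥ (e₀ - e₁)) with hEr
  have hden : (0:ℝ) < (1 - 2 / k₃) * lam := mul_pos hc hlam0
  have t1 : (σ + k₅) * ((1 - 2 / k₃) * lam) * Zi
      ≤ (σ + k₅) * ((1 - 2 / k₃) * lam) * (lam⁻¹ * Z) :=
    mul_le_mul_of_nonneg_left hZi (le_of_lt (mul_pos hs hden))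
  have t2 : (σ + k₅) * ((1 - 2 / k₃) * lam) * (lam⁻¹ * Z)
      = (σ + k₅) * ((1 - 2 / k₃) * Z) := helper_t2 _ _ _ _ hlam0.ne'
  have t3 : (1 - 2 / k₃) * Z ≤ Pp + (k₂ + k₃ - 1) * F + (k₃ + 1 / k₂ - 1) * (β * Er) := by
    linarith [hkey]
  have t4 : (σ + k₅) * ((1 - 2 / k₃) * Z)
      ≤ (σ + k₅) * (Pp + (k₂ + k₃ - 1) * F + (k₃ + 1 / k₂ - 1) * (β * Er)) :=
    mul_le_mul_of_nonneg_left t3 hs.le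
  have hmain : (σ + k₅) * ((1 - 2 / k₃) * lam) * Zi
      ≤ (1 - 2 / k₃) * lam * (C - k₁⁻¹ * D) + (1 - 2 / k₃) * lam * (k₄ * E)
        + ((k₃ + 1 / k₂ - 1) * (σ + k₅)) * (β * Er) := by
    linarith [t1, t2, t4, q1, q2]
  have h6 : (σ + k₅) / 2 * Zi
      = (σ + k₅) * ((1 - 2 / k₃) * lam) * Zi / (2 * ((1 - 2 / k₃) * lam)) :=
    helper_h6 _ _ _ hden.ne'
  have h7 : (1 / 2) * (C - k₁⁻¹ * D) + (1 / 2) * (k₄ * E)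
        + (((k₃ + 1 / k₂ - 1) * (σ + k₅)) / (2 * (1 - 2 / k₃) * lam)) * (β * Er)
      = ((1 - 2 / k₃) * lam * (C - k₁⁻¹ * D) + (1 - 2 / k₃) * lam * (k₄ * E)
          + ((k₃ + 1 / k₂ - 1) * (σ + k₅)) * (β * Er)) / (2 * ((1 - 2 / k₃) * lam)) :=
    helper_h7 _ _ _ _ _ _ hc.ne' hlam0.ne'
  have h5 : (σ + k₅) / 2 * Zi
      ≤ (1 / 2) * (C - k₁⁻¹ * D) + (1 / 2) * (k₄ * E)
        + (((k₃ + 1 / k₂ - 1) * (σ + k₅)) / (2 * (1 - 2 / k₃) * lam)) * (β * Er) := by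
    rw [h6, h7]
    exact div_le_div_of_nonneg_right hmain (by positivity)
  linarith [q3, h5, hW]
end
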